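/- If f and g are entire functions on ℂ satisfying f(z)^2 + g(z)^2 = 1 for all z, then there exists an entire function h such that f = cos ∘ h and g = sin ∘ h. -/

import Mathlib

open Complex

/-- Every entire function has an entire primitive. -/
lemma exists_primitive_entire (q : ℂ → ℂ) (hq : Differentiable ℂ q) :
    ∃ φ : ℂ → ℂ, ∀ z, HasDerivAt φ (q z) z := by
  set c : ℕ → ℂ := fun n => (Nat.factorial n : ℂ)⁻¹ * iteratedDeriv n q 0 with hc
  have key : ∀ z : ℂ, HasSum (fun n : ℕ => c n * z ^ n) (q z) := by
    intro z
    have := Complex.hasSum_taylorSeries_of_entire hq 0 z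
    convert this using 2 with n
    · rfl
    simp [hc, smul_eq_mul]
    ring
  refine ⟨fun z => ∑' n : ℕ, c n / (n + 1) * z ^ (n + 1), fun z => ?_⟩
  set R : ℝ := ‖z‖ + 1 with hR
  have hR0 : (0:ℝ) < R := by positivity
  -- bound on coefficients from summability at 2R
  have hsum := (key ((2 * R : ℝ) : ℂ)).summable
  have htend : Filter.Tendsto (fun n => ‖c n * ((2 * R : ℝ) : ℂ) ^ n‖) Filter.atTop (nhds 0) := by
    simpa using (hsum.tendsto_atTop_zero).norm
  obtain ⟨C, hC⟩ := htend.bddAbove_range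
  have hCb : ∀ n : ℕ, ‖c n‖ * (2 * R) ^ n ≤ C := by
    intro n
    have := hC (Set.mem_range_self n)
    rwa [norm_mul, norm_pow, Complex.norm_real, Real.norm_of_nonneg (by positivity)] at this
  have hu : Summable (fun n : ℕ => C * (1 / 2 : ℝ) ^ n) :=
    (summable_geometric_of_lt_one (by norm_num) (by norm_num)).mul_left C
  have hder : ∀ (n : ℕ), ∀ y ∈ Metric.ball (0:ℂ) R,
      HasDerivAt (fun w => c n / (n + 1) * w ^ (n + 1)) (c n * y ^ n) y := by
    intro n y _
    have := (hasDerivAt_pow (n + 1) y).const_mul (c n / (n + 1))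
    convert this using 1
    · rfl
    · rfl
    have hne : ((n : ℂ) + 1) ≠ 0 := Nat.cast_add_one_ne_zero n
    rw [Nat.add_sub_cancel]; push_cast
    field_simp
  have hbound : ∀ (n : ℕ) (y : ℂ), y ∈ Metric.ball (0:ℂ) R →
      ‖c n * y ^ n‖ ≤ C * (1 / 2) ^ n := by
    intro n y hy
    rw [Metric.mem_ball, dist_zero_right] at hy
    rw [norm_mul, norm_pow]
    have h1 : ‖c n‖ * ‖y‖ ^ n ≤ ‖c n‖ * R ^ n :=
      mul_le_mul_of_nonneg_left (pow_le_pow_left₀ (norm_nonneg y) hy.le n) (norm_nonneg _)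
    have hhalf : (2 * R) * (1 / 2 : ℝ) = R := by ring
    have h2 : ‖c n‖ * R ^ n = (‖c n‖ * (2 * R) ^ n) * (1 / 2 : ℝ) ^ n := by
      rw [mul_assoc, ← mul_pow, hhalf]
    exact h1.trans (le_of_eq_of_le h2
      (mul_le_mul_of_nonneg_right (hCb n) (by positivity)))
  have h0 : Summable fun n : ℕ => c n / (n + 1) * (0:ℂ) ^ (n + 1) := by
    simpa using summable_zero
  have hz0 : (0:ℂ) ∈ Metric.ball (0:ℂ) R := Metric.mem_ball_self hR0
  have hzz : z ∈ Metric.ball (0:ℂ) R := by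
    rw [Metric.mem_ball, dist_zero_right, hR]; linarith
  have := hasDerivAt_tsum_of_isPreconnected hu Metric.isOpen_ball
    (convex_ball (0:ℂ) R).isPreconnected hder hbound hz0 h0 hzz
  rwa [(key z).tsum_eq] at this

theorem stmt_0 (f g : ℂ → ℂ) (hf : Differentiable ℂ f) (hg : Differentiable ℂ g)
    (h : ∀ z : ℂ, f z ^ 2 + g z ^ 2 = 1) :
    ∃ h : ℂ → ℂ, Differentiable ℂ h ∧ f = Complex.cos ∘ h ∧ g = Complex.sin ∘ h := by
  set u : ℂ → ℂ := fun z => f z + I * g z with hu_def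
  have hud : Differentiable ℂ u := hf.add (differentiable_const I |>.mul hg)
  have hinv : ∀ z, u z * (f z - I * g z) = 1 := by
    intro z
    simp only [hu_def]
    linear_combination h z - (g z) ^ 2 * Complex.I_sq
  have hu0 : ∀ z, u z ≠ 0 := fun z hz => by
    have := hinv z; rw [hz, zero_mul] at this; exact one_ne_zero this.symm
  have hA : AnalyticOnNhd ℂ u Set.univ := fun y _ => hud.analyticAt y
  have hderiv_u : Differentiable ℂ (deriv u) := fun z =>
    (hA.deriv z (Set.mem_univ z)).differentiableAt
  set q : ℂ → ℂ := fun z => deriv u z / u z with hq_def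
  have hq : Differentiable ℂ q := hderiv_u.div hud hu0
  obtain ⟨φ, hφ⟩ := exists_primitive_entire q hq
  have hφd : Differentiable ℂ φ := fun z => (hφ z).differentiableAt
  set V : ℂ → ℂ := fun z => u z * Complex.exp (-φ z) with hV_def
  have hVd : Differentiable ℂ V := hud.mul (hφd.neg.cexp)
  have hVderiv : ∀ z, deriv V z = 0 := by
    intro z
    have hd : HasDerivAt V (deriv u z * Complex.exp (-φ z) +
        u z * (Complex.exp (-φ z) * -(q z))) z :=
      (hud z).hasDerivAt.mul ((hφ z).neg.cexp)
    rw [hd.deriv]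
    have : u z ≠ 0 := hu0 z
    simp only [hq_def]
    field_simp [hq_def]
    ring
  have hVconst : ∀ z, V z = V 0 := fun z =>
    is_const_of_deriv_eq_zero hVd hVderiv z 0
  have hV0 : V 0 ≠ 0 := mul_ne_zero (hu0 0) (Complex.exp_ne_zero _)
  set h' : ℂ → ℂ := fun z => -I * (φ z + Complex.log (V 0)) with hh_def
  have hexp : ∀ z, Complex.exp (h' z * I) = u z := by
    intro z
    have h1 : h' z * I = φ z + Complex.log (V 0) := by
      simp only [hh_def]; ring_nf; rw [Complex.I_sq]; ring
    rw [h1, Complex.exp_add, Complex.exp_log hV0, ← hVconst z]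
    show cexp (φ z) * (u z * cexp (-φ z)) = u z
    rw [mul_comm (u z), ← mul_assoc, ← Complex.exp_add]
    simp
  have hexp' : ∀ z, Complex.exp (-(h' z * I)) = f z - I * g z := by
    intro z
    rw [Complex.exp_neg, hexp z]
    exact inv_eq_of_mul_eq_one_right (hinv z)
  refine ⟨h', (differentiable_const (-I)).mul
    (hφd.add (differentiable_const _)), ?_, ?_⟩
  · funext z
    have huz : u z = f z + I * g z := rfl
    simp only [Function.comp_apply, Complex.cos, neg_mul, hexp z, hexp' z, huz]
    ring
  · funext z
    have huz : u z = f z + I * g z := rfl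
    simp only [Function.comp_apply, Complex.sin, neg_mul, hexp z, hexp' z, huz]
    linear_combination (g z) * Complex.I_sq
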